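/- Let ε ≠ 0 and let X, Y ∈ gl(N,ℂ), I : ℂᴺ → ℂᵏ, J : ℂᵏ → ℂᴺ satisfy [X,Y] + J∘I = ε·Id_N. If S ⊆ ℂᴺ is a subspace with X(S) ⊆ S, Y(S) ⊆ S, and J(ℂᵏ) ⊆ S, then S = ℂᴺ. -/

import Mathlib

/-!
STATEMENT 8: Let ε ≠ 0 and X, Y ∈ gl(N,ℂ), I : ℂᴺ → ℂᵏ, J : ℂᵏ → ℂᴺ satisfy
[X,Y] + J∘I = ε·Id_N. If S ⊆ ℂᴺ is a subspace with X(S) ⊆ S, Y(S) ⊆ S, and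
J(ℂᵏ) ⊆ S, then S = ℂᴺ (stability of deformed ADHM data).
-/

theorem adhm_stability (N k : ℕ) (ε : ℂ) (hε : ε ≠ 0)
    (X Y : (Fin N → ℂ) →ₗ[ℂ] (Fin N → ℂ))
    (I : (Fin N → ℂ) →ₗ[ℂ] (Fin k → ℂ))
    (J : (Fin k → ℂ) →ₗ[ℂ] (Fin N → ℂ))
    (h : X ∘ₗ Y - Y ∘ₗ X + J ∘ₗ I
      = ε • (LinearMap.id : (Fin N → ℂ) →ₗ[ℂ] (Fin N → ℂ)))
    (S : Submodule ℂ (Fin N → ℂ))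
    (hX : ∀ s ∈ S, X s ∈ S) (hY : ∀ s ∈ S, Y s ∈ S)
    (hJ : LinearMap.range J ≤ S) :
    S = ⊤ := by
  have hXle : S ≤ S.comap X := fun s hs => hX s hs
  have hYle : S ≤ S.comap Y := fun s hs => hY s hs
  set Xb := S.mapQ S X hXle with hXb
  set Yb := S.mapQ S Y hYle with hYb
  -- key identity on the quotient
  have key : Xb ∘ₗ Yb - Yb ∘ₗ Xb
      = ε • (LinearMap.id : ((Fin N → ℂ) ⧸ S) →ₗ[ℂ] ((Fin N → ℂ) ⧸ S)) := by
    refine LinearMap.ext fun v => ?_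
    obtain ⟨x, rfl⟩ := S.mkQ_surjective v
    have h' := congrArg (fun f => S.mkQ (f x)) h
    simp only [LinearMap.add_apply, LinearMap.sub_apply, LinearMap.comp_apply,
      LinearMap.smul_apply, LinearMap.id_apply, map_add, map_sub, map_smul] at h'
    have hJI : S.mkQ (J (I x)) = 0 := by
      rw [Submodule.mkQ_apply, Submodule.Quotient.mk_eq_zero]
      exact hJ ⟨I x, rfl⟩
    rw [hJI, add_zero] at h'
    simpa [hXb, hYb, Submodule.mapQ_apply] using h'
  have htr := congrArg (LinearMap.trace ℂ _) key
  rw [map_sub, LinearMap.trace_comp_comm' Xb Yb, sub_self, map_smul,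
    LinearMap.trace_id] at htr
  have hfin : Module.finrank ℂ ((Fin N → ℂ) ⧸ S) = 0 := by
    have := htr.symm
    rw [smul_eq_mul, mul_eq_zero] at this
    rcases this with h1 | h1
    · exact absurd h1 hε
    · exact_mod_cast h1
  have : Subsingleton ((Fin N → ℂ) ⧸ S) :=
    (Module.finrank_zero_iff).mp hfin
  exact Submodule.Quotient.subsingleton_iff.mp this
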